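/- arXiv:1808.03971 — 8 statements merged into one kernel-verified Lean document; each statement's English description precedes it below -/
import Mathlib

section
/- Let $\bar{\theta} \in (0,1)$ and define $\phi_{\bar{\theta}}(\eta) = 1$ if $|\eta| \geq \bar{\theta}$ and $\phi_{\bar{\theta}}(\eta) = (1 - \mathrm{sign}(\eta)\bar{\theta})/(1-\eta)$ if $|\eta| < \bar{\theta}$ (with $\mathrm{sign}(0)=1$). Then for all $\eta \in \mathbb{R}$, $|1 - \phi_{\bar{\theta}}(\eta)(1-\eta)| \geq \bar{\theta}$. -/
theorem stmt_0 (θb : ℝ) (hθb : θb ∈ Set.Ioo (0:ℝ) 1)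
    (φ : ℝ → ℝ)
    (hφ : ∀ η : ℝ, φ η =
      if |η| ≥ θb then 1 else (1 - (if 0 ≤ η then (1:ℝ) else -1) * θb) / (1 - η)) :
    ∀ η : ℝ, θb ≤ |1 - φ η * (1 - η)| := by
  intro η
  obtain ⟨h0, h1⟩ := hθb
  rw [hφ]
  by_cases h : |η| ≥ θb
  · simp [h, abs_sub_comm]
  · rw [if_neg h]
    push_neg at h
    have hη1 : 1 - η ≠ 0 := by
      have := abs_lt.mp (h.trans h1)
      intro hc; linarith [this.2]
    rw [div_mul_cancel₀ _ hη1]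
    by_cases hs : 0 ≤ η <;> simp [hs, abs_of_pos h0, le_abs_self]
end

section
/- Let $\bar{\theta}, \tau \in (0,1)$, let $m_k \geq 0$, and let $B_k^0 = I$, with $B_k^{i+1} = B_k^i + (\tilde{y}_i - B_k^i s_i)\hat{s}_i^T/(\hat{s}_i^T s_i)$ for $i = 0, \dots, m_k - 1$, where $\tilde{y}_i = \theta_i y_i + (1-\theta_i) B_k^i s_i$ with $\theta_i = \phi_{\bar{\theta}}(\eta_i)$, $\eta_i = \hat{s}_i^T (B_k^i)^{-1} y_i / \|\hat{s}_i\|_2^2$, and $\hat{s}_i^T s_i = \|\hat{s}_i\|_2^2 > 0$. Then $|\det(B_k^{m_k})| \geq \bar{\theta}^{m_k} > 0$; in particular, $B_k^{m_k}$ is invertible. -/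
open Matrix

private lemma scalar_key (θb e : ℝ) (h0 : 0 < θb) (h1 : θb < 1) :
    θb ≤ |1 + (if |e| ≥ θb then (1:ℝ)
      else (1 - (if 0 ≤ e then (1:ℝ) else -1) * θb) / (1 - e)) * (e - 1)| := by
  split_ifs with h hs
  · have : (1:ℝ) + 1 * (e - 1) = e := by ring
    rw [this]; exact h
  · push_neg at h
    have he : e < 1 := lt_trans (lt_of_abs_lt h) h1
    have hne : (1:ℝ) - e ≠ 0 := by intro hh; nlinarith
    have : (1:ℝ) + (1 - 1 * θb) / (1 - e) * (e - 1) = θb := by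
      field_simp
      ring
    rw [this, abs_of_pos h0]
  · push_neg at h hs
    have he : e < 1 := lt_trans (lt_of_abs_lt h) h1
    have hne : (1:ℝ) - e ≠ 0 := by intro hh; nlinarith
    have : (1:ℝ) + (1 - (-1) * θb) / (1 - e) * (e - 1) = -θb := by
      field_simp
      ring
    rw [this, abs_neg, abs_of_pos h0]

theorem stmt_3 (n : ℕ) (θb : ℝ) (hθb : θb ∈ Set.Ioo (0:ℝ) 1) (mk : ℕ)
    (s y shat : ℕ → (Fin n → ℝ))
    (hshat : ∀ i < mk, shat i ⬝ᵥ s i = shat i ⬝ᵥ shat i ∧ 0 < shat i ⬝ᵥ shat i)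
    (φ : ℝ → ℝ)
    (hφ : ∀ η : ℝ, φ η =
      if |η| ≥ θb then 1 else (1 - (if 0 ≤ η then (1:ℝ) else -1) * θb) / (1 - η))
    (B : ℕ → Matrix (Fin n) (Fin n) ℝ) (hB0 : B 0 = 1)
    (η θ : ℕ → ℝ)
    (hη : ∀ i < mk, η i = (shat i ⬝ᵥ ((B i)⁻¹.mulVec (y i))) / (shat i ⬝ᵥ shat i))
    (hθ : ∀ i < mk, θ i = φ (η i))
    (ytilde : ℕ → (Fin n → ℝ))
    (hyt : ∀ i < mk, ytilde i = θ i • y i + (1 - θ i) • (B i).mulVec (s i))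
    (hBsucc : ∀ i < mk, B (i + 1) =
      B i + (shat i ⬝ᵥ s i)⁻¹ • Matrix.vecMulVec (ytilde i - (B i).mulVec (s i)) (shat i)) :
    θb ^ mk ≤ |(B mk).det| ∧ 0 < θb ^ mk ∧ IsUnit (B mk).det := by
  obtain ⟨h0, h1⟩ := hθb
  have key : ∀ i ≤ mk, θb ^ i ≤ |(B i).det| := by
    intro i hi
    induction i with
    | zero => simp [hB0]
    | succ i ih =>
      have hilt : i < mk := hi
      have IH := ih (le_of_lt hilt)
      have hpow : (0:ℝ) < θb ^ i := pow_pos h0 i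
      have habs : 0 < |(B i).det| := lt_of_lt_of_le hpow IH
      have hu : IsUnit (B i).det := isUnit_iff_ne_zero.mpr (abs_pos.mp habs)
      obtain ⟨hss1, hss2⟩ := hshat i hilt
      have hssne : shat i ⬝ᵥ shat i ≠ 0 := ne_of_gt hss2
      set c : ℝ := (shat i ⬝ᵥ s i)⁻¹ with hc
      set u : Fin n → ℝ := ytilde i - (B i).mulVec (s i) with hudef
      have hsmul : c • Matrix.vecMulVec u (shat i) = Matrix.vecMulVec (c • u) (shat i) := by
        ext a b
        simp [Matrix.vecMulVec_apply, mul_assoc]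
      have hdet : (B (i+1)).det =
          (B i).det * (1 + shat i ⬝ᵥ ((B i)⁻¹ *ᵥ (c • u))) := by
        rw [hBsucc i hilt, ← hudef, ← hc, hsmul, vecMulVec_eq (Fin 1),
          det_add_replicateCol_mul_replicateRow hu]
        congr 1
        rw [Matrix.mul_assoc, ← Matrix.replicateCol_mulVec]
        simp [Matrix.det_fin_one, Matrix.replicateRow_mul_replicateCol_apply]
      -- compute the scalar
      have hcancel : (B i)⁻¹ *ᵥ ((B i) *ᵥ s i) = s i := by
        rw [Matrix.mulVec_mulVec, Matrix.nonsing_inv_mul _ hu, Matrix.one_mulVec]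
      have huval : u = θ i • (y i - (B i) *ᵥ s i) := by
        rw [hudef, hyt i hilt]
        ext a
        simp [Pi.smul_apply, mulVec]
        ring
      have hscal : shat i ⬝ᵥ ((B i)⁻¹ *ᵥ (c • u)) = θ i * (η i - 1) := by
        rw [huval, smul_comm c (θ i), Matrix.mulVec_smul, Matrix.mulVec_smul,
          Matrix.mulVec_sub, hcancel, dotProduct_smul, dotProduct_smul,
          dotProduct_sub]
        have hηi := hη i hilt
        have : shat i ⬝ᵥ ((B i)⁻¹ *ᵥ y i) = η i * (shat i ⬝ᵥ shat i) := by
          rw [hηi]; field_simp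
        rw [this, hss1, hc, hss1]
        field_simp
        linear_combination (η i * θ i - θ i) * mul_inv_cancel₀ hssne
      have hfac : θb ≤ |1 + θ i * (η i - 1)| := by
        rw [hθ i hilt, hφ (η i)]
        exact scalar_key θb (η i) h0 h1
      calc θb ^ (i+1) = θb ^ i * θb := by ring
        _ ≤ |(B i).det| * |1 + θ i * (η i - 1)| :=
            mul_le_mul IH hfac (le_of_lt h0) (le_of_lt habs)
        _ = |(B (i+1)).det| := by rw [hdet, ← hscal, abs_mul]
  have hmain := key mk le_rfl
  have hpow : (0:ℝ) < θb ^ mk := pow_pos h0 mk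
  exact ⟨hmain, hpow, isUnit_iff_ne_zero.mpr (abs_pos.mp (lt_of_lt_of_le hpow hmain))⟩
end

section
/- Let $f: \mathbb{R}^n \to \mathbb{R}^n$ be nonexpansive in the $\ell_2$-norm, $g(x) = x - f(x)$, and suppose the updates satisfy $\|\hat{s}_i\|_2 \geq \tau \|s_i\|_2$ for all $i$ and $m_k \leq m$ for all $k$, with $\theta_i \in [1-\bar{\theta}, 1+\bar{\theta}]$, where $s_i = x^{i+1} - x^i$, $y_i = g(x^{i+1}) - g(x^i)$, and $B_k$ is defined by the regularized rank-one update recursion starting from $B_k^0 = I$: $B_k^{i+1} = B_k^i + \theta_i(y_i - B_k^i s_i)\hat{s}_i^T/\|\hat{s}_i\|_2^2$. Then $\|B_k\|_2 \leq 3((1+\bar{\theta}+\tau)/\tau)^m - 2$. -/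
set_option maxHeartbeats 1000000 in
set_option synthInstance.maxHeartbeats 400000 in

theorem stmt_4 (n : ℕ) (θb τ : ℝ) (hθb : θb ∈ Set.Ioo (0:ℝ) 1)
    (hτ : τ ∈ Set.Ioo (0:ℝ) 1) (m : ℕ) (hm : 1 ≤ m)
    (f : EuclideanSpace ℝ (Fin n) → EuclideanSpace ℝ (Fin n))
    (hf : ∀ a b, ‖f a - f b‖ ≤ ‖a - b‖)
    (g : EuclideanSpace ℝ (Fin n) → EuclideanSpace ℝ (Fin n))
    (hg : ∀ a, g a = a - f a)
    (x : ℕ → EuclideanSpace ℝ (Fin n))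
    (s y : ℕ → EuclideanSpace ℝ (Fin n))
    (hs : ∀ i, s i = x (i + 1) - x i)
    (hy : ∀ i, y i = g (x (i + 1)) - g (x i))
    (shat : ℕ → EuclideanSpace ℝ (Fin n))
    (hshat : ∀ i, τ * ‖s i‖ ≤ ‖shat i‖)
    (θ : ℕ → ℝ) (hθ : ∀ i, θ i ∈ Set.Icc (1 - θb) (1 + θb))
    (k0 mk : ℕ) (hmk : mk ≤ m)
    (B : ℕ → (EuclideanSpace ℝ (Fin n) →L[ℝ] EuclideanSpace ℝ (Fin n)))
    (hB0 : B 0 = 1)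
    (hBsucc : ∀ i < mk, B (i + 1) = B i +
      θ i • (((‖shat (k0 + i)‖ ^ 2)⁻¹ • (innerSL ℝ (shat (k0 + i)))).smulRight
        (y (k0 + i) - B i (s (k0 + i))))) :
    ‖B mk‖ ≤ 3 * ((1 + θb + τ) / τ) ^ m - 2 := by
  obtain ⟨hθb0, hθb1⟩ := hθb
  obtain ⟨hτ0, hτ1⟩ := hτ
  set c : ℝ := (1 + θb + τ) / τ with hc
  have hc1 : 1 ≤ c := by
    rw [hc, le_div_iff₀ hτ0]; nlinarith
  have hyb : ∀ i, ‖y i‖ ≤ 2 * ‖s i‖ := by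
    intro i
    have hyi : y i = s i - (f (x (i+1)) - f (x i)) := by
      rw [hy, hg, hg, hs]; abel
    calc ‖y i‖ ≤ ‖s i‖ + ‖f (x (i+1)) - f (x i)‖ := by
          rw [hyi]; exact norm_sub_le _ _
    _ ≤ ‖s i‖ + ‖x (i+1) - x i‖ := by linarith [hf (x (i+1)) (x i)]
    _ = 2 * ‖s i‖ := by rw [← hs]; ring
  have key : ∀ i ≤ mk, ‖B i‖ + 2 ≤ 3 * c ^ i := by
    intro i hi
    induction i with
    | zero =>
      have : ‖B 0‖ ≤ 1 := by
        rw [hB0, ContinuousLinearMap.one_def]; exact ContinuousLinearMap.norm_id_le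
      simpa using by linarith
    | succ j ih =>
      have hj : j ≤ mk := Nat.le_of_succ_le hi
      have ih' := ih hj
      have hstep := hBsucc j (Nat.lt_of_succ_le hi)
      set i' := k0 + j with hi'
      have hBnn : (0:ℝ) ≤ ‖B j‖ := norm_nonneg _
      have hfac : (‖shat i'‖ ^ 2)⁻¹ * ‖shat i'‖ * ‖s i'‖ ≤ τ⁻¹ := by
        rcases eq_or_lt_of_le (norm_nonneg (shat i')) with h0 | h0
        · rw [← h0]; simp; positivity
        · have hsle : ‖s i'‖ ≤ ‖shat i'‖ / τ := by
            rw [le_div_iff₀ hτ0]; linarith [hshat i', mul_comm τ ‖s i'‖]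
          have : (‖shat i'‖ ^ 2)⁻¹ * ‖shat i'‖ = ‖shat i'‖⁻¹ := by
            field_simp
          rw [this]
          calc ‖shat i'‖⁻¹ * ‖s i'‖ ≤ ‖shat i'‖⁻¹ * (‖shat i'‖ / τ) := by
                exact mul_le_mul_of_nonneg_left hsle (by positivity)
          _ = τ⁻¹ := by field_simp
      have hθj : |θ j| ≤ 1 + θb := by
        obtain ⟨h1, h2⟩ := hθ j
        rw [abs_le]; constructor <;> linarith
      have hdiff : ‖y i' - B j (s i')‖ ≤ (2 + ‖B j‖) * ‖s i'‖ := by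
        calc ‖y i' - B j (s i')‖ ≤ ‖y i'‖ + ‖B j (s i')‖ := norm_sub_le _ _
        _ ≤ 2 * ‖s i'‖ + ‖B j‖ * ‖s i'‖ :=
            add_le_add (hyb i') ((B j).le_opNorm _)
        _ = (2 + ‖B j‖) * ‖s i'‖ := by ring
      have hterm : ‖θ j • (((‖shat i'‖ ^ 2)⁻¹ • (innerSL ℝ (shat i'))).smulRight
          (y i' - B j (s i')))‖ ≤ (1 + θb) * τ⁻¹ * (2 + ‖B j‖) := by
        rw [norm_smul (θ j) ((((‖shat i'‖ ^ 2)⁻¹ • (innerSL ℝ (shat i'))).smulRight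
          (y i' - B j (s i')))), ContinuousLinearMap.norm_smulRight_apply,
          norm_smul ((‖shat i'‖ ^ 2)⁻¹) (innerSL ℝ (shat i')), innerSL_apply_norm]
        have h1 : ‖(‖shat i'‖ ^ 2)⁻¹‖ = (‖shat i'‖ ^ 2)⁻¹ := by
          rw [Real.norm_eq_abs, abs_of_nonneg (by positivity)]
        rw [Real.norm_eq_abs, h1]
        calc |θ j| * ((‖shat i'‖ ^ 2)⁻¹ * ‖shat i'‖ * ‖y i' - B j (s i')‖)
            ≤ (1 + θb) * ((‖shat i'‖ ^ 2)⁻¹ * ‖shat i'‖ * ((2 + ‖B j‖) * ‖s i'‖)) := by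
              apply mul_le_mul hθj _ (by positivity) (by linarith)
              exact mul_le_mul_of_nonneg_left hdiff (by positivity)
        _ = (1 + θb) * ((‖shat i'‖ ^ 2)⁻¹ * ‖shat i'‖ * ‖s i'‖) * (2 + ‖B j‖) := by ring
        _ ≤ (1 + θb) * τ⁻¹ * (2 + ‖B j‖) := by
              apply mul_le_mul_of_nonneg_right _ (by linarith)
              exact mul_le_mul_of_nonneg_left hfac (by linarith)
      have hnorm : ‖B (j+1)‖ ≤ ‖B j‖ + (1 + θb) * τ⁻¹ * (2 + ‖B j‖) := by
        rw [hstep]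
        exact le_trans (norm_add_le _ _) (by linarith)
      have hcval : 1 + (1 + θb) * τ⁻¹ = c := by
        rw [hc]; field_simp; ring
      have hcpow : (0:ℝ) ≤ c ^ j := by positivity
      calc ‖B (j+1)‖ + 2 ≤ (‖B j‖ + 2) * (1 + (1 + θb) * τ⁻¹) := by nlinarith
      _ = (‖B j‖ + 2) * c := by rw [hcval]
      _ ≤ (3 * c ^ j) * c := mul_le_mul_of_nonneg_right ih' (by linarith)
      _ = 3 * c ^ (j+1) := by ring
  have h1 := key mk le_rfl
  have h2 : c ^ mk ≤ c ^ m := pow_le_pow_right₀ hc1 hmk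
  linarith
end

section
/- Let $f: \mathbb{R}^n \to \mathbb{R}^n$ be nonexpansive in the $\ell_2$-norm with nonempty fixed-point set, and let $(x^k)$ be generated by the stabilized type-I Anderson acceleration (Algorithm AA-I-S-m): in each iteration $k$, either $x^{k+1} = x^k - H_k g(x^k)$ with $\|H_k\|_2 \leq C$ and $\|g(x^k)\|_2 \leq D\bar{U}(n_{AA}+1)^{-(1+\epsilon)}$ where $n_{AA}$ counts prior accelerated steps, or $x^{k+1} = (1-\alpha)x^k + \alpha f(x^k)$ with $\alpha \in (0,1)$. Then $x^k$ converges to a fixed point $x^\star = f(x^\star)$. -/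
open Filter

lemma combo_norm_sq {E : Type*} [NormedAddCommGroup E] [InnerProductSpace ℝ E]
    (t : ℝ) (u v : E) :
    ‖(1 - t) • u + t • v‖ ^ 2
      = (1 - t) * ‖u‖ ^ 2 + t * ‖v‖ ^ 2 - t * (1 - t) * ‖u - v‖ ^ 2 := by
  rw [← real_inner_self_eq_norm_sq, ← real_inner_self_eq_norm_sq,
    ← real_inner_self_eq_norm_sq, ← real_inner_self_eq_norm_sq]
  simp only [inner_add_left, inner_add_right, inner_sub_left, inner_sub_right,
    real_inner_smul_left, real_inner_smul_right, real_inner_comm u v]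
  ring

set_option maxHeartbeats 1000000 in
theorem stmt_9 (n : ℕ) (C D U ε α : ℝ)
    (hC : 0 < C) (hD : 0 < D) (hU : 0 < U) (hε : 0 < ε) (hα : α ∈ Set.Ioo (0:ℝ) 1)
    (f : EuclideanSpace ℝ (Fin n) → EuclideanSpace ℝ (Fin n))
    (hf : ∀ a b, ‖f a - f b‖ ≤ ‖a - b‖)
    (hfix : ∃ y, f y = y)
    (g : EuclideanSpace ℝ (Fin n) → EuclideanSpace ℝ (Fin n))
    (hg : ∀ a, g a = a - f a)
    (x : ℕ → EuclideanSpace ℝ (Fin n))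
    (acc : ℕ → Bool)
    (nAA : ℕ → ℕ)
    (hnAA : ∀ k, nAA k = ((Finset.range k).filter (fun j => acc j = true)).card)
    (hacc : ∀ k, acc k = true →
      (∃ H : EuclideanSpace ℝ (Fin n) →L[ℝ] EuclideanSpace ℝ (Fin n),
        ‖H‖ ≤ C ∧ x (k + 1) = x k - H (g (x k))) ∧
      ‖g (x k)‖ ≤ D * U * ((nAA k : ℝ) + 1) ^ (-(1 + ε)))
    (hkm : ∀ k, acc k = false → x (k + 1) = (1 - α) • x k + α • f (x k)) :
    ∃ xstar, f xstar = xstar ∧ Filter.Tendsto x Filter.atTop (nhds xstar) := by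
  obtain ⟨hα0, hα1⟩ := hα
  obtain ⟨y, hy⟩ := hfix
  -- the perturbation sequence
  set e : ℕ → ℝ := fun k =>
    if acc k = true then C * (D * U * ((nAA k : ℝ) + 1) ^ (-(1 + ε))) else 0 with he_def
  have he_nonneg : ∀ k, 0 ≤ e k := by
    intro k
    by_cases h : acc k = true <;> simp [he_def, h]
    positivity
  -- summability of e
  have hbase : Summable (fun m : ℕ => C * (D * U * ((m : ℝ) + 1) ^ (-(1 + ε)))) := by
    have h1 : Summable (fun m : ℕ => ((m : ℝ)) ^ (-(1 + ε))) :=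
      Real.summable_nat_rpow.mpr (by linarith)
    have h2 := h1.comp_injective Nat.succ_injective
    have h3 : ((fun m : ℕ => ((m : ℝ)) ^ (-(1 + ε))) ∘ Nat.succ)
        = fun m : ℕ => ((m : ℝ) + 1) ^ (-(1 + ε)) := by
      funext m; simp only [Function.comp_apply]; push_cast; ring_nf
    rw [h3] at h2
    exact (h2.mul_left _).mul_left _
  have hmono : ∀ j k : ℕ, acc j = true → j < k → nAA j < nAA k := by
    intro j k hj hjk
    rw [hnAA, hnAA]
    have hsub : insert j ((Finset.range j).filter (fun l => acc l = true))
        ⊆ (Finset.range k).filter (fun l => acc l = true) := by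
      intro l hl
      rcases Finset.mem_insert.mp hl with rfl | hl
      · exact Finset.mem_filter.mpr ⟨Finset.mem_range.mpr hjk, hj⟩
      · obtain ⟨hlr, hla⟩ := Finset.mem_filter.mp hl
        exact Finset.mem_filter.mpr ⟨Finset.mem_range.mpr (lt_trans (Finset.mem_range.mp hlr) hjk), hla⟩
    have hni : j ∉ (Finset.range j).filter (fun l => acc l = true) := by
      simp [Finset.mem_filter]
    calc ((Finset.range j).filter (fun l => acc l = true)).card
        < (insert j ((Finset.range j).filter (fun l => acc l = true))).card := by
          rw [Finset.card_insert_of_notMem hni]; omega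
      _ ≤ _ := Finset.card_le_card hsub
  have hsum : Summable e := by
    have hinj : Function.Injective
        (fun s : {k : ℕ // acc k = true} => nAA s.val) := by
      intro s t hst
      rcases lt_trichotomy s.val t.val with h | h | h
      · exact absurd hst (ne_of_lt (hmono _ _ s.prop h))
      · exact Subtype.ext h
      · exact absurd hst.symm (ne_of_lt (hmono _ _ t.prop h))
    have hsub : Summable ((fun m : ℕ => C * (D * U * ((m : ℝ) + 1) ^ (-(1 + ε))))
        ∘ (fun s : {k : ℕ // acc k = true} => nAA s.val)) :=
      hbase.comp_injective hinj
    have : Summable ((fun k => C * (D * U * ((nAA k : ℝ) + 1) ^ (-(1 + ε))))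
        ∘ (Subtype.val : {k : ℕ // acc k = true} → ℕ)) := hsub
    have hind := summable_subtype_iff_indicator.mp this
    have : e = Set.indicator {k : ℕ | acc k = true}
        (fun k => C * (D * U * ((nAA k : ℝ) + 1) ^ (-(1 + ε)))) := by
      funext k
      by_cases h : acc k = true <;> simp [he_def, h, Set.indicator]
    rw [this]
    exact hind
  set E := ∑' k, e k with hE_def
  have hE0 : 0 ≤ E := tsum_nonneg he_nonneg
  have hek_le : ∀ k, e k ≤ E := fun k => Summable.le_tsum hsum k (fun j _ => he_nonneg j)
  -- single step inequality towards any fixed point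
  have hstep : ∀ z, f z = z → ∀ k, ‖x (k + 1) - z‖ ≤ ‖x k - z‖ + e k := by
    intro z hz k
    by_cases h : acc k = true
    · obtain ⟨⟨H, hH, hx⟩, hgb⟩ := hacc k h
      rw [hx]
      have h1 : x k - H (g (x k)) - z = (x k - z) - H (g (x k)) := by abel
      rw [h1]
      calc ‖(x k - z) - H (g (x k))‖ ≤ ‖x k - z‖ + ‖H (g (x k))‖ := norm_sub_le _ _
        _ ≤ ‖x k - z‖ + C * (D * U * ((nAA k : ℝ) + 1) ^ (-(1 + ε))) := by
            gcongr
            calc ‖H (g (x k))‖ ≤ ‖H‖ * ‖g (x k)‖ := H.le_opNorm _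
              _ ≤ C * (D * U * ((nAA k : ℝ) + 1) ^ (-(1 + ε))) := by
                  apply mul_le_mul hH hgb (norm_nonneg _) hC.le
        _ = ‖x k - z‖ + e k := by simp [he_def, h]
    · have h' : acc k = false := by simpa using h
      rw [hkm k h']
      have h1 : (1 - α) • x k + α • f (x k) - z
          = (1 - α) • (x k - z) + α • (f (x k) - z) := by
        module
      rw [h1]
      have h2 : ‖f (x k) - z‖ ≤ ‖x k - z‖ := by
        calc ‖f (x k) - z‖ = ‖f (x k) - f z‖ := by rw [hz]
          _ ≤ ‖x k - z‖ := hf _ _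
      calc ‖(1 - α) • (x k - z) + α • (f (x k) - z)‖
          ≤ ‖(1 - α) • (x k - z)‖ + ‖α • (f (x k) - z)‖ := norm_add_le _ _
        _ = (1 - α) * ‖x k - z‖ + α * ‖f (x k) - z‖ := by
            rw [norm_smul, norm_smul, Real.norm_eq_abs, Real.norm_eq_abs,
              abs_of_pos hα0, abs_of_pos (by linarith : (0:ℝ) < 1 - α)]
        _ ≤ (1 - α) * ‖x k - z‖ + α * ‖x k - z‖ := by gcongr
        _ = ‖x k - z‖ + e k := by
            have hek : e k = 0 := by simp [he_def, h]
            rw [hek, add_zero]; ring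
  -- boundedness
  have habove : ∀ z, f z = z → ∀ k, ‖x k - z‖ ≤ ‖x 0 - z‖ + E := by
    intro z hz k
    have hpart : ∀ k, ‖x k - z‖ ≤ ‖x 0 - z‖ + ∑ j ∈ Finset.range k, e j := by
      intro k
      induction k with
      | zero => simp
      | succ k ih =>
          calc ‖x (k + 1) - z‖ ≤ ‖x k - z‖ + e k := hstep z hz k
            _ ≤ ‖x 0 - z‖ + ∑ j ∈ Finset.range k, e j + e k := by linarith
            _ = ‖x 0 - z‖ + ∑ j ∈ Finset.range (k + 1), e j := by
                rw [Finset.sum_range_succ]; ring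
    calc ‖x k - z‖ ≤ ‖x 0 - z‖ + ∑ j ∈ Finset.range k, e j := hpart k
      _ ≤ ‖x 0 - z‖ + E := by
          gcongr
          exact Summable.sum_le_tsum _ (fun j _ => he_nonneg j) hsum
  set R := ‖x 0 - y‖ + E with hR_def
  have hR0 : 0 ≤ R := add_nonneg (norm_nonneg _) hE0
  set M := 2 * R + E with hM_def
  have hM0 : 0 ≤ M := by positivity
  -- the square inequality
  set v : ℕ → ℝ := fun k => if acc k = true then 0 else ‖g (x k)‖ ^ 2 with hv_def
  have hv_nonneg : ∀ k, 0 ≤ v k := by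
    intro k; by_cases h : acc k = true <;> simp [hv_def, h]
  have hb : ∀ k, ‖x (k + 1) - y‖ ^ 2 + α * (1 - α) * v k
      ≤ ‖x k - y‖ ^ 2 + M * e k := by
    intro k
    by_cases h : acc k = true
    · have h1 : ‖x (k + 1) - y‖ ≤ ‖x k - y‖ + e k := hstep y hy k
      have h2 : ‖x k - y‖ ≤ R := habove y hy k
      have h3 : e k ≤ E := hek_le k
      have h4 : 0 ≤ e k := he_nonneg k
      have h5 : v k = 0 := by simp [hv_def, h]
      rw [h5]
      have h6 : ‖x (k + 1) - y‖ ^ 2 ≤ (‖x k - y‖ + e k) ^ 2 :=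
        pow_le_pow_left₀ (norm_nonneg _) h1 2
      have h7 : e k * (2 * ‖x k - y‖ + e k) ≤ e k * M :=
        mul_le_mul_of_nonneg_left (by simp only [hM_def]; linarith) h4
      nlinarith [h6, h7]
    · have h' : acc k = false := by simpa using h
      have hek : e k = 0 := by simp [he_def, h]
      have hvk : v k = ‖g (x k)‖ ^ 2 := by simp [hv_def, h]
      have h1 : x (k + 1) - y = (1 - α) • (x k - y) + α • (f (x k) - y) := by
        rw [hkm k h']; module
      have h2 : (x k - y) - (f (x k) - y) = g (x k) := by rw [hg]; abel
      have h3 : ‖f (x k) - y‖ ≤ ‖x k - y‖ := by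
        calc ‖f (x k) - y‖ = ‖f (x k) - f y‖ := by rw [hy]
          _ ≤ ‖x k - y‖ := hf _ _
      have h4 := combo_norm_sq α (x k - y) (f (x k) - y)
      rw [h2] at h4
      rw [h1, h4, hek, hvk]
      have h5 : ‖f (x k) - y‖ ^ 2 ≤ ‖x k - y‖ ^ 2 := by
        exact pow_le_pow_left₀ (norm_nonneg _) h3 2
      nlinarith
  -- summability of v
  have htel : ∀ N, ‖x N - y‖ ^ 2 + ∑ k ∈ Finset.range N, α * (1 - α) * v k
      ≤ ‖x 0 - y‖ ^ 2 + M * ∑ k ∈ Finset.range N, e k := by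
    intro N
    induction N with
    | zero => simp
    | succ N ih =>
        have := hb N
        rw [Finset.sum_range_succ, Finset.sum_range_succ]
        linarith
  have hsumv : Summable (fun k => α * (1 - α) * v k) := by
    apply summable_of_sum_range_le (c := ‖x 0 - y‖ ^ 2 + M * E)
    · intro k
      exact mul_nonneg (mul_nonneg hα0.le (by linarith)) (hv_nonneg k)
    · intro N
      have h1 := htel N
      have h2 : ∑ k ∈ Finset.range N, e k ≤ E :=
        Summable.sum_le_tsum _ (fun j _ => he_nonneg j) hsum
      have h3 : M * ∑ k ∈ Finset.range N, e k ≤ M * E :=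
        mul_le_mul_of_nonneg_left h2 hM0
      nlinarith [sq_nonneg ‖x N - y‖]
  have htendv : Tendsto v atTop (nhds 0) := by
    have h1 := hsumv.tendsto_atTop_zero
    have hαα : α * (1 - α) ≠ 0 := ne_of_gt (mul_pos hα0 (by linarith))
    have h2 : Tendsto (fun k => (α * (1 - α))⁻¹ * (α * (1 - α) * v k)) atTop
        (nhds ((α * (1 - α))⁻¹ * 0)) := h1.const_mul _
    have h3 : (fun k => (α * (1 - α))⁻¹ * (α * (1 - α) * v k)) = v := by
      funext k; rw [← mul_assoc, inv_mul_cancel₀ hαα, one_mul]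
    rw [h3, mul_zero] at h2
    exact h2
  -- ‖g (x k)‖ → 0
  have htend_g : Tendsto (fun k => ‖g (x k)‖) atTop (nhds 0) := by
    have heq : ∀ k, ‖g (x k)‖
        = (if acc k = true then ‖g (x k)‖ else 0) + Real.sqrt (v k) := by
      intro k
      by_cases h : acc k = true <;>
        simp [hv_def, h, Real.sqrt_sq (norm_nonneg _)]
    have h1 : Tendsto (fun k => (if acc k = true then ‖g (x k)‖ else 0)) atTop
        (nhds 0) := by
      apply squeeze_zero (fun k => by positivity) (g := fun k => C⁻¹ * e k)
      · intro k
        by_cases h : acc k = true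
        · simp only [h, if_true, he_def]
          rw [← mul_assoc, inv_mul_cancel₀ hC.ne', one_mul]
          exact (hacc k h).2
        · simp [h]
          positivity
      · have hh := hsum.tendsto_atTop_zero.const_mul C⁻¹
        rw [mul_zero] at hh
        exact hh
    have h2 : Tendsto (fun k => Real.sqrt (v k)) atTop (nhds 0) := by
      have := (Real.continuous_sqrt.tendsto 0).comp htendv
      simpa [Function.comp_def] using this
    have := h1.add h2
    rw [add_zero] at this
    exact this.congr (fun k => (heq k).symm)
  -- cluster point
  have hball : ∀ k, x k ∈ Metric.closedBall y R := by
    intro k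
    rw [Metric.mem_closedBall, dist_eq_norm]
    exact habove y hy k
  obtain ⟨xstar, _, φ, hφ, hconv⟩ :=
    tendsto_subseq_of_bounded Metric.isBounded_closedBall hball
  have hfc : Continuous f := by
    have : LipschitzWith 1 f := by
      apply LipschitzWith.of_dist_le_mul
      intro a b
      rw [dist_eq_norm, dist_eq_norm]
      simpa using hf a b
    exact this.continuous
  have hgc : Continuous g := by
    have hgeq : g = fun a => a - f a := funext hg
    rw [hgeq]
    exact continuous_id.sub hfc
  have hfix_star : f xstar = xstar := by
    have h1 : Tendsto (fun j => ‖g (x (φ j))‖) atTop (nhds ‖g xstar‖) :=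
      ((continuous_norm.comp hgc).tendsto xstar).comp hconv
    have h2 : Tendsto (fun j => ‖g (x (φ j))‖) atTop (nhds 0) :=
      htend_g.comp hφ.tendsto_atTop
    have h3 : ‖g xstar‖ = 0 := tendsto_nhds_unique h1 h2
    have h4 : g xstar = 0 := norm_eq_zero.mp h3
    rw [hg] at h4
    have := sub_eq_zero.mp h4
    exact this.symm
  refine ⟨xstar, hfix_star, ?_⟩
  -- final convergence
  set T : ℕ → ℝ := fun i => ∑' k, e (k + i) with hT_def
  have hsum_shift : ∀ i, Summable (fun k => e (k + i)) := by
    intro i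
    exact hsum.comp_injective (fun a b h => by omega)
  have hT_nonneg : ∀ i, 0 ≤ T i := fun i => tsum_nonneg (fun k => he_nonneg _)
  have hT_succ : ∀ i, T i = e i + T (i + 1) := by
    intro i
    have h1 := Summable.tsum_eq_zero_add (hsum_shift i)
    simp only [zero_add] at h1
    rw [hT_def]
    simp only
    rw [h1]
    congr 1
    apply tsum_congr
    intro k
    congr 1
    omega
  set A : ℕ → ℝ := fun i => ‖x i - xstar‖ + T i with hA_def
  have hA_anti : Antitone A := by
    apply antitone_nat_of_succ_le
    intro i
    have h1 : ‖x (i + 1) - xstar‖ ≤ ‖x i - xstar‖ + e i := hstep xstar hfix_star i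
    have h2 := hT_succ i
    simp only [hA_def]
    linarith
  have hA_bdd : BddBelow (Set.range A) := by
    refine ⟨0, ?_⟩
    rintro _ ⟨i, rfl⟩
    exact add_nonneg (norm_nonneg _) (hT_nonneg i)
  have hA_tend : Tendsto A atTop (nhds (⨅ i, A i)) :=
    tendsto_atTop_ciInf hA_anti hA_bdd
  have hT_tend : Tendsto T atTop (nhds 0) := tendsto_sum_nat_add e
  have ha_tend : Tendsto (fun i => ‖x i - xstar‖) atTop (nhds (⨅ i, A i)) := by
    have := hA_tend.sub hT_tend
    simp only [hA_def] at this ⊢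
    simpa using this
  have hsub_tend : Tendsto (fun j => ‖x (φ j) - xstar‖) atTop (nhds 0) := by
    have h1 : Tendsto (fun j => ‖x (φ j) - xstar‖) atTop (nhds ‖xstar - xstar‖) :=
      ((continuous_norm.comp (continuous_id.sub continuous_const)).tendsto xstar).comp hconv
    simpa using h1
  have hsub_tend' : Tendsto (fun j => ‖x (φ j) - xstar‖) atTop (nhds (⨅ i, A i)) :=
    ha_tend.comp hφ.tendsto_atTop
  have hinf0 : (⨅ i, A i) = 0 := tendsto_nhds_unique hsub_tend' hsub_tend
  rw [hinf0] at ha_tend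
  exact tendsto_iff_norm_sub_tendsto_zero.mpr ha_tend
end

section
/- Under the assumptions of the global convergence theorem for the stabilized type-I Anderson acceleration (nonexpansive $f$ with a fixed point, accelerated steps $x^{k+1} = x^k - H_k g_k$ with $\|H_k\|_2 \leq C$ taken only when $\|g_k\|_2 \leq D\bar{U}(i+1)^{-(1+\epsilon)}$ where $i$ counts prior accelerated steps, and KM steps $x^{k+1} = (1-\alpha)x^k + \alpha f(x^k)$ otherwise), the residuals satisfy $\lim_{k\to\infty} \|g(x^k)\|_2 = 0$. -/
theorem stmt_10 (n : ℕ) (C D U ε α : ℝ)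
    (hC : 0 < C) (hD : 0 < D) (hU : 0 < U) (hε : 0 < ε) (hα : α ∈ Set.Ioo (0:ℝ) 1)
    (f : EuclideanSpace ℝ (Fin n) → EuclideanSpace ℝ (Fin n))
    (hf : ∀ a b, ‖f a - f b‖ ≤ ‖a - b‖)
    (hfix : ∃ y, f y = y)
    (g : EuclideanSpace ℝ (Fin n) → EuclideanSpace ℝ (Fin n))
    (hg : ∀ a, g a = a - f a)
    (x : ℕ → EuclideanSpace ℝ (Fin n))
    (acc : ℕ → Bool)
    (nAA : ℕ → ℕ)
    (hnAA : ∀ k, nAA k = ((Finset.range k).filter (fun j => acc j = true)).card)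
    (hacc : ∀ k, acc k = true →
      (∃ H : EuclideanSpace ℝ (Fin n) →L[ℝ] EuclideanSpace ℝ (Fin n),
        ‖H‖ ≤ C ∧ x (k + 1) = x k - H (g (x k))) ∧
      ‖g (x k)‖ ≤ D * U * ((nAA k : ℝ) + 1) ^ (-(1 + ε)))
    (hkm : ∀ k, acc k = false → x (k + 1) = (1 - α) • x k + α • f (x k)) :
    Filter.Tendsto (fun k => ‖g (x k)‖) Filter.atTop (nhds 0) := by
  obtain ⟨y, hy⟩ := hfix
  obtain ⟨hα0, hα1⟩ := hα
  set β : ℝ := α * (1 - α) with hβdef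
  have hβ : 0 < β := mul_pos hα0 (by linarith)
  set d : ℕ → ℝ := fun k => ‖x k - y‖ with hd
  have hd0 : ∀ k, 0 ≤ d k := fun k => norm_nonneg _
  set b : ℕ → ℝ := fun i => D * U * ((i : ℝ) + 1) ^ (-(1+ε)) with hb
  have hb0 : ∀ i, 0 ≤ b i := by
    intro i
    exact mul_nonneg (by positivity) (Real.rpow_nonneg (by positivity) _)
  have hbDU : ∀ i, b i ≤ D * U := by
    intro i
    have : ((i:ℝ)+1) ^ (-(1+ε)) ≤ 1 :=
      Real.rpow_le_one_of_one_le_of_nonpos (by push_cast; linarith [Nat.cast_nonneg (α := ℝ) i])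
        (by linarith)
    calc b i ≤ D * U * 1 := by
            apply mul_le_mul_of_nonneg_left this (by positivity)
      _ = D * U := by ring
  have hbsum : Summable b := by
    apply Summable.mul_left
    have h1 : Summable (fun i : ℕ => (i:ℝ) ^ (-(1+ε))) :=
      Real.summable_nat_rpow.2 (by linarith)
    have := (summable_nat_add_iff 1).2 h1
    convert this using 2 with i
    case e'_3 => rfl
    push_cast; ring_nf
  set S : ℝ := ∑' i, b i with hS
  -- sum over accelerated steps up to N
  set T : ℕ → ℝ := fun N => ∑ j ∈ (Finset.range N).filter (fun j => acc j = true), b (nAA j)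
    with hT
  -- nAA is strictly monotone on accelerated indices
  have hnAAlt : ∀ j₁ j₂, j₁ < j₂ → acc j₁ = true → nAA j₁ < nAA j₂ := by
    intro j₁ j₂ hlt h1
    rw [hnAA, hnAA]
    have hsub : insert j₁ ((Finset.range j₁).filter (fun j => acc j = true)) ⊆
        (Finset.range j₂).filter (fun j => acc j = true) := by
      intro a ha
      rcases Finset.mem_insert.1 ha with rfl | ha
      · exact Finset.mem_filter.2 ⟨Finset.mem_range.2 hlt, h1⟩
      · rcases Finset.mem_filter.1 ha with ⟨hr, hacc'⟩
        exact Finset.mem_filter.2 ⟨Finset.mem_range.2 (lt_trans (Finset.mem_range.1 hr) hlt), hacc'⟩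
    have hnotmem : j₁ ∉ (Finset.range j₁).filter (fun j => acc j = true) := by
      simp
    calc ((Finset.range j₁).filter (fun j => acc j = true)).card
        < (insert j₁ ((Finset.range j₁).filter (fun j => acc j = true))).card := by
          rw [Finset.card_insert_of_notMem hnotmem]; omega
      _ ≤ _ := Finset.card_le_card hsub
  have hTS : ∀ N, T N ≤ S := by
    intro N
    set s := (Finset.range N).filter (fun j => acc j = true) with hs
    have hinj : Set.InjOn nAA s := by
      intro a ha b' hb' hab
      rcases Finset.mem_filter.1 ha with ⟨_, ha2⟩
      rcases Finset.mem_filter.1 hb' with ⟨_, hb2⟩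
      by_contra hne
      rcases lt_or_gt_of_ne hne with h | h
      · exact absurd hab (Nat.ne_of_lt (hnAAlt _ _ h ha2))
      · exact absurd hab.symm (Nat.ne_of_lt (hnAAlt _ _ h hb2))
    calc T N = ∑ i ∈ s.image nAA, b i := (Finset.sum_image (fun a ha b' hb' => hinj ha hb')).symm
      _ ≤ S := Summable.sum_le_tsum _ (fun i _ => hb0 i) hbsum
  have hTsucc_acc : ∀ N, acc N = true → T (N+1) = T N + b (nAA N) := by
    intro N h
    rw [hT]
    simp only [Finset.range_add_one, Finset.filter_insert, h, if_true]
    rw [Finset.sum_insert (by simp)]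
    ring
  have hTsucc_km : ∀ N, acc N = false → T (N+1) = T N := by
    intro N h
    rw [hT]
    simp [Finset.range_add_one, Finset.filter_insert, h]
  -- residual bound on accelerated steps
  have hgb : ∀ k, acc k = true → ‖g (x k)‖ ≤ b (nAA k) := fun k h => (hacc k h).2
  -- step inequality (A): accelerated
  have stepA : ∀ k, acc k = true → d (k+1) ≤ d k + C * b (nAA k) := by
    intro k h
    obtain ⟨⟨H, hH, hx⟩, _⟩ := hacc k h
    have : x (k+1) - y = (x k - y) - H (g (x k)) := by rw [hx]; abel
    calc d (k+1) = ‖(x k - y) - H (g (x k))‖ := by show ‖x (k+1) - y‖ = _; rw [this]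
      _ ≤ ‖x k - y‖ + ‖H (g (x k))‖ := norm_sub_le _ _
      _ ≤ d k + C * b (nAA k) := by
          have h1 : ‖H (g (x k))‖ ≤ ‖H‖ * ‖g (x k)‖ := H.le_opNorm _
          have h2 : ‖H‖ * ‖g (x k)‖ ≤ C * b (nAA k) :=
            mul_le_mul hH (hgb k h) (norm_nonneg _) hC.le
          exact add_le_add le_rfl (h1.trans h2)
  -- convex combination identity
  have key : ∀ (a b' : EuclideanSpace ℝ (Fin n)),
      ‖(1-α)•a + α•b'‖^2 = (1-α)*‖a‖^2 + α*‖b'‖^2 - β*‖a-b'‖^2 := by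
    intro a b'
    have h1' := norm_add_sq_real ((1-α)•a) (α•b')
    have h2' := norm_sub_sq_real a b'
    simp only [norm_smul, real_inner_smul_left, real_inner_smul_right,
      Real.norm_eq_abs, abs_of_pos hα0, abs_of_pos (by linarith : (0:ℝ) < 1-α)] at h1'
    rw [h1', h2', hβdef]; ring
  -- step inequality (B): KM
  have stepB : ∀ k, acc k = false → d (k+1)^2 ≤ d k^2 - β * ‖g (x k)‖^2 := by
    intro k h
    have hxk : x (k+1) - y = (1-α)•(x k - y) + α•(f (x k) - y) := by
      rw [hkm k h]; module
    have hgk : (x k - y) - (f (x k) - y) = g (x k) := by rw [hg]; abel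
    have hfb : ‖f (x k) - y‖ ≤ d k := by
      rw [hd]; calc ‖f (x k) - y‖ = ‖f (x k) - f y‖ := by rw [hy]
        _ ≤ ‖x k - y‖ := hf _ _
    calc d (k+1)^2 = ‖(1-α)•(x k - y) + α•(f (x k) - y)‖^2 := by show ‖x (k+1) - y‖^2 = _; rw [hxk]
      _ = (1-α)*‖x k - y‖^2 + α*‖f (x k) - y‖^2 - β*‖(x k - y)-(f (x k) - y)‖^2 := key _ _
      _ ≤ d k^2 - β * ‖g (x k)‖^2 := by
          rw [hgk]
          have h1 : ‖f (x k) - y‖^2 ≤ d k^2 :=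
            pow_le_pow_left₀ (norm_nonneg _) hfb 2
          have : (1-α)*‖x k - y‖^2 = (1-α)*d k^2 := rfl
          rw [this]
          nlinarith [hd0 k]
  have stepBmono : ∀ k, acc k = false → d (k+1) ≤ d k := by
    intro k h
    have := stepB k h
    have h2 : d (k+1)^2 ≤ d k^2 := by nlinarith [norm_nonneg (g (x k)), hβ]
    exact (pow_le_pow_iff_left₀ (hd0 _) (hd0 _) two_ne_zero).1 h2
  -- boundedness of d
  set M : ℝ := d 0 + C * S with hM
  have hdT : ∀ k, d k ≤ d 0 + C * T k := by
    intro k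
    induction k with
    | zero => simp [hT]
    | succ k ih =>
      cases hca : acc k with
      | false =>
        rw [hTsucc_km k hca]
        exact (stepBmono k hca).trans ih
      | true =>
        rw [hTsucc_acc k hca]
        calc d (k+1) ≤ d k + C * b (nAA k) := stepA k hca
          _ ≤ d 0 + C * T k + C * b (nAA k) := by linarith
          _ = d 0 + C * (T k + b (nAA k)) := by ring
  have hdM : ∀ k, d k ≤ M := by
    intro k
    calc d k ≤ d 0 + C * T k := hdT k
      _ ≤ M := by rw [hM]; have := hTS k; nlinarith
  have hM0 : 0 ≤ M := (hd0 0).trans (hdM 0)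
  set K : ℝ := 2 * M * C + C^2 * (D * U) with hK
  have hK0 : 0 ≤ K := by rw [hK]; positivity
  set c : ℕ → ℝ := fun k => if acc k = true then 0 else β * ‖g (x k)‖^2 with hc
  have hc0 : ∀ k, 0 ≤ c k := by
    intro k
    rw [hc]; dsimp only
    split
    · exact le_rfl
    · positivity
  have hmain : ∀ N, d N^2 + ∑ k ∈ Finset.range N, c k ≤ d 0^2 + K * T N := by
    intro N
    induction N with
    | zero => simp [hT]
    | succ N ih =>
      rw [Finset.sum_range_succ]
      cases hca : acc N with
      | false =>
        have hcN : c N = β * ‖g (x N)‖^2 := by simp [hc, hca]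
        have hsb := stepB N hca
        rw [hTsucc_km N hca, hcN]
        linarith
      | true =>
        have hcN : c N = 0 := by simp [hc, hca]
        have hsa := stepA N hca
        have hsa2 : d (N+1)^2 ≤ (d N + C * b (nAA N))^2 := by
          apply pow_le_pow_left₀ (hd0 _) hsa
        rw [hTsucc_acc N hca, hcN]
        have hbn := hb0 (nAA N)
        have hbd := hbDU (nAA N)
        have hdn := hd0 N
        have hdm := hdM N
        have h5 : d N * (C * b (nAA N)) ≤ M * (C * b (nAA N)) :=
          mul_le_mul_of_nonneg_right hdm (mul_nonneg hC.le hbn)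
        have h6 : b (nAA N) * (C^2 * b (nAA N)) ≤ (D*U) * (C^2 * b (nAA N)) :=
          mul_le_mul_of_nonneg_right hbd (by positivity)
        nlinarith [h5, h6]
  have hcsum : Summable c := by
    apply summable_of_sum_range_le hc0 (c := d 0^2 + K * S)
    intro N
    have h1 := hmain N
    have h2 := hTS N
    have h3 := sq_nonneg (d N)
    have h4 := mul_le_mul_of_nonneg_left h2 hK0
    linarith
  set w : ℕ → ℝ := fun k => if acc k = true then b (nAA k) else 0 with hw
  have hw0 : ∀ k, 0 ≤ w k := by
    intro k
    rw [hw]; dsimp only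
    split
    · exact hb0 _
    · exact le_rfl
  have hwT : ∀ N, ∑ k ∈ Finset.range N, w k = T N := by
    intro N
    rw [hT]; dsimp only
    rw [Finset.sum_filter]
  have hwsum : Summable w :=
    summable_of_sum_range_le hw0 (fun N => by rw [hwT]; exact hTS N)
  -- final squeeze
  have hle : ∀ k, ‖g (x k)‖ ≤ w k + Real.sqrt (c k / β) := by
    intro k
    cases hca : acc k with
    | false =>
      have hwk : w k = 0 := by simp [hw, hca]
      have hck : c k = β * ‖g (x k)‖^2 := by simp [hc, hca]
      have hdiv : c k / β = ‖g (x k)‖^2 := by rw [hck]; field_simp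
      rw [hwk, hdiv, Real.sqrt_sq (norm_nonneg _)]
      simp
    | true =>
      have hwk : w k = b (nAA k) := by simp [hw, hca]
      have h1 := hgb k hca
      have h2 : (0:ℝ) ≤ Real.sqrt (c k / β) := Real.sqrt_nonneg _
      rw [hwk]
      linarith
  have hwz := hwsum.tendsto_atTop_zero
  have hcz := hcsum.tendsto_atTop_zero
  have hcz2 : Filter.Tendsto (fun k => Real.sqrt (c k / β)) Filter.atTop (nhds 0) := by
    have h1 := hcz.div_const β
    rw [zero_div] at h1
    have h2 := (Real.continuous_sqrt.tendsto 0).comp h1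
    rw [Real.sqrt_zero] at h2
    exact h2
  have hsum0 : Filter.Tendsto (fun k => w k + Real.sqrt (c k / β)) Filter.atTop (nhds 0) := by
    have h3 := hwz.add hcz2
    rw [add_zero] at h3
    exact h3
  exact squeeze_zero (fun k => norm_nonneg _) hle hsum0
end

section
/- Let $\|\cdot\|$ be any norm on $\mathbb{R}^n$ and $f: \mathbb{R}^n \to \mathbb{R}^n$ be $\gamma$-contractive in $\|\cdot\|$ with $\gamma \in (0,1)$ and fixed point $y$. Suppose $(x^k)$ satisfies: for $k$ in an index set $K_{AA}$ (enumerated $k_0 < k_1 < \dots$), $\|x^{k_i+1} - y\| \leq \|x^{k_i} - y\| + \epsilon'_{k_i}$ with $\sum_i \epsilon'_{k_i} < \infty$; and for all other $k$, $\|x^{k+1} - y\| \leq \gamma\|x^k - y\|$, with infinitely many indices of the latter type, including $k = 0$. Then $\lim_{k\to\infty} x^k = y$. -/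
open Filter Finset

private def NCopy (n : ℕ) : Type := EuclideanSpace ℝ (Fin n)

private lemma norm_bound (n : ℕ) (N : EuclideanSpace ℝ (Fin n) → ℝ)
    (hN0 : ∀ v, 0 ≤ N v)
    (hNeq : ∀ v, N v = 0 ↔ v = 0)
    (hNsmul : ∀ (a : ℝ) v, N (a • v) = |a| * N v)
    (hNadd : ∀ u v, N (u + v) ≤ N u + N v) :
    ∃ C : ℝ, 0 < C ∧ ∀ v, ‖v‖ ≤ C * N v := by
  letI : AddCommGroup (NCopy n) := inferInstanceAs (AddCommGroup (EuclideanSpace ℝ (Fin n)))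
  letI : Module ℝ (NCopy n) := inferInstanceAs (Module ℝ (EuclideanSpace ℝ (Fin n)))
  let F : AddGroupNorm (NCopy n) :=
    { toFun := N
      map_zero' := (hNeq 0).2 rfl
      add_le' := hNadd
      neg' := fun v => by
        calc N (-v) = N ((-1:ℝ) • v) := congrArg N (neg_one_smul ℝ v).symm
          _ = |(-1:ℝ)| * N v := hNsmul (-1) v
          _ = N v := by simp
      eq_zero_of_map_eq_zero' := fun v h => (hNeq v).1 h }
  letI inst1 : NormedAddCommGroup (NCopy n) := F.toNormedAddCommGroup
  letI : NormedSpace ℝ (NCopy n) := ⟨fun a v => le_of_eq (hNsmul a v)⟩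
  letI : FiniteDimensional ℝ (NCopy n) :=
    inferInstanceAs (FiniteDimensional ℝ (EuclideanSpace ℝ (Fin n)))
  let T : NCopy n →ₗ[ℝ] EuclideanSpace ℝ (Fin n) := LinearMap.id
  let T' := LinearMap.toContinuousLinearMap T
  refine ⟨max ‖T'‖ 1, lt_of_lt_of_le one_pos (le_max_right _ _), fun v => ?_⟩
  have h1 := T'.le_opNorm v
  have h3 : @norm (NCopy n) inst1.toNorm v = N v := rfl
  rw [h3] at h1
  calc ‖v‖ = ‖T' v‖ := rfl
    _ ≤ ‖T'‖ * N v := h1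
    _ ≤ max ‖T'‖ 1 * N v :=
        mul_le_mul_of_nonneg_right (le_max_left _ _) (hN0 v)

theorem stmt_11 (n : ℕ) (γ : ℝ) (hγ : γ ∈ Set.Ioo (0:ℝ) 1)
    (N : EuclideanSpace ℝ (Fin n) → ℝ)
    (hN0 : ∀ v, 0 ≤ N v)
    (hNeq : ∀ v, N v = 0 ↔ v = 0)
    (hNsmul : ∀ (a : ℝ) v, N (a • v) = |a| * N v)
    (hNadd : ∀ u v, N (u + v) ≤ N u + N v)
    (f : EuclideanSpace ℝ (Fin n) → EuclideanSpace ℝ (Fin n))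
    (hf : ∀ a b, N (f a - f b) ≤ γ * N (a - b))
    (y : EuclideanSpace ℝ (Fin n)) (hy : f y = y)
    (x : ℕ → EuclideanSpace ℝ (Fin n))
    (acc : ℕ → Bool) (ε' : ℕ → ℝ)
    (hε'0 : ∀ k, 0 ≤ ε' k) (hε'sum : Summable ε')
    (hacc : ∀ k, acc k = true → N (x (k + 1) - y) ≤ N (x k - y) + ε' k)
    (hkm : ∀ k, acc k = false → N (x (k + 1) - y) ≤ γ * N (x k - y))
    (hinf : {k | acc k = false}.Infinite)
    (h0 : acc 0 = false) :
    Filter.Tendsto x Filter.atTop (nhds y) := by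
  obtain ⟨hγ0, hγ1⟩ := hγ
  set e : ℕ → ℝ := fun k => N (x k - y) with he
  have he0 : ∀ k, 0 ≤ e k := fun k => hN0 _
  -- key inequality
  have key : ∀ K m, K ≤ m →
      e m ≤ γ ^ (((Finset.Ico K m).filter (fun j => acc j = false)).card) * e K
        + ∑ j ∈ Finset.Ico K m, ε' j := by
    intro K m hKm
    induction m, hKm using Nat.le_induction with
    | base => simp
    | succ m hKm ih =>
      have hsum0 : (0:ℝ) ≤ ∑ j ∈ Finset.Ico K m, ε' j :=
        Finset.sum_nonneg fun j _ => hε'0 j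
      have hins : Finset.Ico K (m+1) = insert m (Finset.Ico K m) := by
        ext j
        simp only [Finset.mem_Ico, Finset.mem_insert, Nat.lt_succ_iff]
        omega
      have hmnot : m ∉ Finset.Ico K m := by simp
      have hsumrec : ∑ j ∈ Finset.Ico K (m+1), ε' j
          = ε' m + ∑ j ∈ Finset.Ico K m, ε' j := by
        rw [hins, Finset.sum_insert hmnot]
      cases hcase : acc m with
      | true =>
        have hfil : (Finset.Ico K (m+1)).filter (fun j => acc j = false)
            = (Finset.Ico K m).filter (fun j => acc j = false) := by
          rw [hins, Finset.filter_insert, if_neg (by simp [hcase])]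
        have := hacc m hcase
        rw [hfil, hsumrec]
        calc e (m+1) ≤ e m + ε' m := hacc m hcase
          _ ≤ (γ ^ (((Finset.Ico K m).filter (fun j => acc j = false)).card) * e K
              + ∑ j ∈ Finset.Ico K m, ε' j) + ε' m := by linarith
          _ = _ := by ring
      | false =>
        have hfil : (Finset.Ico K (m+1)).filter (fun j => acc j = false)
            = insert m ((Finset.Ico K m).filter (fun j => acc j = false)) := by
          rw [hins, Finset.filter_insert, if_pos (by simp [hcase])]
        have hmnot2 : m ∉ (Finset.Ico K m).filter (fun j => acc j = false) := by
          simp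
        rw [hfil, Finset.card_insert_of_notMem hmnot2, hsumrec]
        have h1 : e (m+1) ≤ γ * e m := hkm m hcase
        have h2 : γ * e m ≤ γ * (γ ^ (((Finset.Ico K m).filter (fun j => acc j = false)).card) * e K
              + ∑ j ∈ Finset.Ico K m, ε' j) := by
          exact mul_le_mul_of_nonneg_left ih hγ0.le
        have hγsum : γ * (∑ j ∈ Finset.Ico K m, ε' j) ≤ ∑ j ∈ Finset.Ico K m, ε' j := by
          nlinarith
        calc e (m+1) ≤ γ * (γ ^ (((Finset.Ico K m).filter (fun j => acc j = false)).card) * e K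
              + ∑ j ∈ Finset.Ico K m, ε' j) := le_trans h1 h2
          _ = γ ^ ((((Finset.Ico K m).filter (fun j => acc j = false)).card) + 1) * e K
              + γ * ∑ j ∈ Finset.Ico K m, ε' j := by ring
          _ ≤ _ := by linarith [hε'0 m, hγsum]
  -- uniform bound
  set B : ℝ := e 0 + ∑' j, ε' j with hB
  have htsum0 : (0:ℝ) ≤ ∑' j, ε' j := tsum_nonneg hε'0
  have heB : ∀ m, e m ≤ B := by
    intro m
    have h := key 0 m (Nat.zero_le m)
    have hpow : γ ^ (((Finset.Ico 0 m).filter (fun j => acc j = false)).card) ≤ 1 :=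
      pow_le_one₀ hγ0.le hγ1.le
    have hsum : ∑ j ∈ Finset.Ico 0 m, ε' j ≤ ∑' j, ε' j :=
      Summable.sum_le_tsum _ (fun i _ => hε'0 i) hε'sum
    nlinarith [he0 0, he0 m]
  have hB0 : 0 < B + 1 := by nlinarith [he0 0]
  -- e tends to 0
  have hetend : Filter.Tendsto e Filter.atTop (nhds 0) := by
    rw [Metric.tendsto_atTop]
    intro ε hε
    -- tail sums small
    have htail : Filter.Tendsto (fun K => ∑' k, ε' (k + K)) Filter.atTop (nhds 0) :=
      tendsto_sum_nat_add ε'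
    obtain ⟨K, hK⟩ := (Metric.tendsto_atTop.mp htail) (ε/2) (by linarith)
    have hKtail : ∑' k, ε' (k + K) < ε/2 := by
      have := hK K le_rfl
      rw [Real.dist_eq, sub_zero] at this
      have hnn : (0:ℝ) ≤ ∑' k, ε' (k + K) := tsum_nonneg (fun k => hε'0 _)
      rwa [abs_of_nonneg hnn] at this
    -- pick power
    obtain ⟨t, ht⟩ : ∃ t : ℕ, γ ^ t < (ε/2) / (B + 1) :=
      exists_pow_lt_of_lt_one (by positivity) hγ1
    -- pick finite subset of false indices beyond K
    have hinf2 : ({k | acc k = false} \ Set.Iio K).Infinite :=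
      hinf.diff (Set.finite_Iio K)
    obtain ⟨s, hs_sub, hs_card⟩ := hinf2.exists_subset_card_eq t
    set M : ℕ := max (s.sup id + 1) K with hM
    refine ⟨M, fun m hm => ?_⟩
    have hKm : K ≤ m := le_trans (le_max_right _ _) hm
    have hsub : s ⊆ (Finset.Ico K m).filter (fun j => acc j = false) := by
      intro j hj
      have hjA := hs_sub hj
      simp only [Set.mem_diff, Set.mem_setOf_eq, Set.mem_Iio, not_lt] at hjA
      have hjM : j < m := lt_of_lt_of_le
        (lt_of_le_of_lt (Finset.le_sup (f := id) hj) (Nat.lt_succ_self _))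
        (le_trans (le_max_left _ _) hm)
      simp only [Finset.mem_filter, Finset.mem_Ico]
      exact ⟨⟨hjA.2, hjM⟩, hjA.1⟩
    have hcard : t ≤ ((Finset.Ico K m).filter (fun j => acc j = false)).card := by
      rw [← hs_card]; exact Finset.card_le_card hsub
    have hpow : γ ^ (((Finset.Ico K m).filter (fun j => acc j = false)).card) ≤ γ ^ t :=
      pow_le_pow_of_le_one hγ0.le hγ1.le hcard
    have hsumtail : ∑ j ∈ Finset.Ico K m, ε' j ≤ ∑' k, ε' (k + K) := by
      rw [Finset.sum_Ico_eq_sum_range]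
      have hsummable : Summable (fun k => ε' (k + K)) :=
        (summable_nat_add_iff K).mpr hε'sum
      have := Summable.sum_le_tsum (Finset.range (m - K)) (fun i _ => hε'0 _) hsummable
      calc ∑ i ∈ Finset.range (m - K), ε' (K + i)
          = ∑ i ∈ Finset.range (m - K), ε' (i + K) := by
            apply Finset.sum_congr rfl; intro i _; rw [Nat.add_comm]
        _ ≤ ∑' k, ε' (k + K) := this
    have hkey := key K m hKm
    have hγt0 : (0:ℝ) ≤ γ ^ t := by positivity
    have hfinal : e m < ε := by
      have h1 : γ ^ (((Finset.Ico K m).filter (fun j => acc j = false)).card) * e K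
          ≤ γ ^ t * B := by
        apply mul_le_mul hpow (heB K) (he0 K) hγt0
      have h2 : γ ^ t * B < ε/2 := by
        have : γ ^ t * (B + 1) < ε/2 := by
          rw [lt_div_iff₀ hB0] at ht
          linarith [ht]
        nlinarith
      calc e m ≤ γ ^ (((Finset.Ico K m).filter (fun j => acc j = false)).card) * e K
            + ∑ j ∈ Finset.Ico K m, ε' j := hkey
        _ ≤ γ ^ t * B + ∑' k, ε' (k + K) := add_le_add h1 hsumtail
        _ < ε/2 + ε/2 := add_lt_add h2 hKtail
        _ = ε := by ring
    rw [Real.dist_eq, sub_zero, abs_of_nonneg (he0 m)]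
    exact hfinal
  -- conclude
  obtain ⟨C, hC0, hC⟩ := norm_bound n N hN0 hNeq hNsmul hNadd
  rw [tendsto_iff_norm_sub_tendsto_zero]
  apply squeeze_zero (fun k => norm_nonneg _) (fun k => hC (x k - y))
  simpa using hetend.const_mul C
end

section
/- Let $Q \in \mathbb{R}^{N\times N}$ be skew-symmetric ($Q^T = -Q$), let $\mathcal{C} \subseteq \mathbb{R}^N$ be a nonempty closed convex cone with dual cone $\mathcal{C}^*$. If $u, v \in \mathbb{R}^N$ satisfy $Qu = v$, $u \in \mathcal{C}$, $v \in \mathcal{C}^*$, then $\Pi_{\mathcal{C}}(u - v) = u$, where $\Pi_{\mathcal{C}}$ is the Euclidean projection onto $\mathcal{C}$. -/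
open RealInnerProductSpace

theorem stmt_13 (N : ℕ) (Q : Matrix (Fin N) (Fin N) ℝ) (hQ : Q.transpose = -Q)
    (C : Set (EuclideanSpace ℝ (Fin N)))
    (hCne : C.Nonempty) (hCclosed : IsClosed C) (hCconvex : Convex ℝ C)
    (hCcone : ∀ c ∈ C, ∀ t : ℝ, 0 ≤ t → t • c ∈ C)
    (u v : EuclideanSpace ℝ (Fin N))
    (hQu : Matrix.toEuclideanLin Q u = v)
    (hu : u ∈ C)
    (hv : ∀ w ∈ C, 0 ≤ ⟪v, w⟫) :
    u ∈ C ∧ (∀ w ∈ C, ‖(u - v) - u‖ ≤ ‖(u - v) - w‖) ∧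
      (∀ w ∈ C, ‖(u - v) - u‖ = ‖(u - v) - w‖ → w = u) := by
  have hvu : ⟪v, u⟫ = 0 := by
    have hadj : Matrix.toEuclideanLin Q.conjTranspose
        = LinearMap.adjoint (Matrix.toEuclideanLin Q) :=
      Matrix.toEuclideanLin_conjTranspose_eq_adjoint Q
    have hct : Q.conjTranspose = -Q := by
      rw [Matrix.conjTranspose_eq_transpose_of_trivial]; exact hQ
    have h1 : ⟪v, u⟫ = ⟪u, Matrix.toEuclideanLin Q.conjTranspose u⟫ := by
      rw [← hQu, hadj, LinearMap.adjoint_inner_right, real_inner_comm]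
    have h2 : ⟪u, Matrix.toEuclideanLin Q.conjTranspose u⟫ = -⟪v, u⟫ := by
      rw [hct, map_neg, ← hQu]
      simp only [LinearMap.neg_apply, inner_neg_right, neg_inj]
      exact real_inner_comm _ _
    have := h1.trans h2
    linarith
  have key : ∀ w ∈ C, ‖(u - v) - w‖ ^ 2 = ‖u - w‖ ^ 2 + ‖v‖ ^ 2 + 2 * ⟪v, w⟫ := by
    intro w hw
    have : (u - v) - w = (u - w) - v := by abel
    rw [this, norm_sub_sq_real]
    have : ⟪u - w, v⟫ = -⟪v, w⟫ := by
      have h0 : ⟪u, v⟫ = (0:ℝ) := by rw [real_inner_comm]; exact hvu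
      have hwv : ⟪w, v⟫ = ⟪v, w⟫ := real_inner_comm _ _
      rw [inner_sub_left, h0, hwv]; ring
    rw [this]; ring
  have hself : (u - v) - u = -v := by abel
  refine ⟨hu, ?_, ?_⟩
  · intro w hw
    have h := key w hw
    have hvw := hv w hw
    rw [hself, norm_neg]
    have h1 : ‖v‖ ^ 2 ≤ ‖(u - v) - w‖ ^ 2 := by
      rw [h]; nlinarith [sq_nonneg ‖u - w‖]
    nlinarith [norm_nonneg ((u - v) - w), norm_nonneg v]
  · intro w hw heq
    have h := key w hw
    have hvw := hv w hw
    rw [hself, norm_neg] at heq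
    have h2 : ‖v‖ ^ 2 = ‖(u - v) - w‖ ^ 2 := by rw [heq]
    have h3 : ‖u - w‖ ^ 2 + 2 * ⟪v, w⟫ = 0 := by nlinarith
    have h4 : ‖u - w‖ ^ 2 = 0 := by nlinarith [sq_nonneg ‖u - w‖]
    have : u - w = 0 := by
      have := pow_eq_zero_iff (n := 2) (by norm_num) |>.mp h4
      exact norm_eq_zero.mp this
    have := sub_eq_zero.mp this
    exact this.symm
end

section
/- Let $s_0, \dots, s_{m-1} \in \mathbb{R}^n$ be linearly independent, let $\hat{s}_0, \dots, \hat{s}_{m-1}$ be their Gram-Schmidt orthogonalization (without normalization), and let $y_0, \dots, y_{m-1} \in \mathbb{R}^n$. Define $B^0 = I$ and $B^{i+1} = B^i + (y_i - B^i s_i)\hat{s}_i^T/(\hat{s}_i^T s_i)$ for $i = 0, \dots, m-1$. Then $B^m = I + (Y - S)(S^T S)^{-1} S^T$, where $S = [s_0 \cdots s_{m-1}]$ and $Y = [y_0 \cdots y_{m-1}]$; i.e., $B^m$ satisfies $B^m S = Y$ and $B^m z = z$ for all $z \perp \mathrm{span}(S)$. -/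
open Matrix

private lemma fin_strong_ind {m : ℕ} {P : Fin m → Prop}
    (h : ∀ i, (∀ j, j < i → P j) → P i) : ∀ i, P i := by
  have H : ∀ v : ℕ, ∀ i : Fin m, (i : ℕ) = v → P i := by
    intro v
    induction v using Nat.strong_induction_on with
    | _ v ih =>
      intro i hi
      exact h i (fun j hj => ih j.val (hi ▸ hj) j rfl)
  exact fun i => H i.val i rfl

private lemma vmv_mulVec {n : ℕ} (u w v : Fin n → ℝ) :
    Matrix.vecMulVec u w *ᵥ v = (w ⬝ᵥ v) • u := by
  ext a
  simp only [mulVec, dotProduct, vecMulVec_apply, Pi.smul_apply, smul_eq_mul,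
    Finset.sum_mul]
  exact Finset.sum_congr rfl (fun b _ => by ring)

private lemma dp_sum {n : ℕ} {ι : Type*} (v : Fin n → ℝ) (t : Finset ι)
    (f : ι → Fin n → ℝ) : v ⬝ᵥ (∑ k ∈ t, f k) = ∑ k ∈ t, v ⬝ᵥ f k := by
  simp only [dotProduct, Finset.sum_apply, Finset.mul_sum]
  exact Finset.sum_comm

section GS

variable {n m : ℕ} {s shat : Fin m → (Fin n → ℝ)}

private lemma gs_span
    (hshat : ∀ i : Fin m, shat i = s i -
      ∑ j ∈ Finset.univ.filter (fun j => j < i),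
        ((shat j ⬝ᵥ s i) / (shat j ⬝ᵥ shat j)) • shat j) :
    ∀ i : Fin m, shat i ∈ Submodule.span ℝ (s '' Set.Iic i) := by
  apply fin_strong_ind
  intro i ih
  rw [hshat i]
  apply sub_mem
  · exact Submodule.subset_span ⟨i, Set.mem_Iic.mpr le_rfl, rfl⟩
  · apply Submodule.sum_mem
    intro j hj
    rw [Finset.mem_filter] at hj
    apply Submodule.smul_mem
    exact Submodule.span_mono
      (Set.image_mono (Set.Iic_subset_Iic.mpr hj.2.le)) (ih j hj.2)

private lemma gs_nz (hli : LinearIndependent ℝ s)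
    (hshat : ∀ i : Fin m, shat i = s i -
      ∑ j ∈ Finset.univ.filter (fun j => j < i),
        ((shat j ⬝ᵥ s i) / (shat j ⬝ᵥ shat j)) • shat j) :
    ∀ i : Fin m, shat i ≠ 0 := by
  intro i hz
  have h1 : s i ∈ Submodule.span ℝ (s '' Set.Iio i) := by
    have h2 : s i = ∑ j ∈ Finset.univ.filter (fun j => j < i),
        ((shat j ⬝ᵥ s i) / (shat j ⬝ᵥ shat j)) • shat j := by
      have h := hshat i
      rw [hz] at h
      exact eq_of_sub_eq_zero h.symm
    rw [h2]
    apply Submodule.sum_mem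
    intro j hj
    rw [Finset.mem_filter] at hj
    apply Submodule.smul_mem
    exact Submodule.span_mono
      (Set.image_mono (fun x hx => lt_of_le_of_lt (Set.mem_Iic.mp hx) hj.2))
      (gs_span hshat j)
  exact hli.notMem_span_image (by simp) h1

private lemma gs_orth (hli : LinearIndependent ℝ s)
    (hshat : ∀ i : Fin m, shat i = s i -
      ∑ j ∈ Finset.univ.filter (fun j => j < i),
        ((shat j ⬝ᵥ s i) / (shat j ⬝ᵥ shat j)) • shat j) :
    ∀ i j : Fin m, j < i → shat j ⬝ᵥ shat i = 0 := by
  apply fin_strong_ind (P := fun i => ∀ j : Fin m, j < i → shat j ⬝ᵥ shat i = 0)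
  intro i ih j hj
  have hzz : shat j ⬝ᵥ shat j ≠ 0 :=
    fun h => gs_nz hli hshat j (dotProduct_self_eq_zero.mp h)
  rw [hshat i, dotProduct_sub, dp_sum _ _ _]
  have hsum : ∑ k ∈ Finset.univ.filter (fun k => k < i),
      shat j ⬝ᵥ (((shat k ⬝ᵥ s i) / (shat k ⬝ᵥ shat k)) • shat k)
      = shat j ⬝ᵥ s i := by
    rw [Finset.sum_eq_single j]
    · rw [dotProduct_smul, smul_eq_mul, div_mul_cancel₀ _ hzz]
    · intro k hk hkj
      rw [Finset.mem_filter] at hk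
      have hzero : shat j ⬝ᵥ shat k = 0 := by
        rcases lt_or_gt_of_ne hkj with h | h
        · rw [dotProduct_comm]; exact ih j hj k h
        · exact ih k hk.2 j h
      rw [dotProduct_smul, hzero, smul_zero]
    · intro h
      exact absurd (by simp [hj] : j ∈ Finset.univ.filter (fun k => k < i)) h
  rw [hsum, sub_self]

private lemma gs_self (hli : LinearIndependent ℝ s)
    (hshat : ∀ i : Fin m, shat i = s i -
      ∑ j ∈ Finset.univ.filter (fun j => j < i),
        ((shat j ⬝ᵥ s i) / (shat j ⬝ᵥ shat j)) • shat j) :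
    ∀ i : Fin m, shat i ⬝ᵥ s i = shat i ⬝ᵥ shat i := by
  intro i
  have h : s i = shat i + ∑ j ∈ Finset.univ.filter (fun j => j < i),
      ((shat j ⬝ᵥ s i) / (shat j ⬝ᵥ shat j)) • shat j := by
    rw [hshat i]; ring
  rw [h, dotProduct_add, dp_sum _ _ _]
  have : ∑ j ∈ Finset.univ.filter (fun j => j < i),
      shat i ⬝ᵥ (((shat j ⬝ᵥ s i) / (shat j ⬝ᵥ shat j)) • shat j) = 0 := by
    apply Finset.sum_eq_zero
    intro j hj
    rw [Finset.mem_filter] at hj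
    rw [dotProduct_smul, dotProduct_comm (shat i) (shat j), gs_orth hli hshat i j hj.2, smul_zero]
  rw [this, add_zero]

private lemma gs_perp_s (hli : LinearIndependent ℝ s)
    (hshat : ∀ i : Fin m, shat i = s i -
      ∑ j ∈ Finset.univ.filter (fun j => j < i),
        ((shat j ⬝ᵥ s i) / (shat j ⬝ᵥ shat j)) • shat j) :
    ∀ i j : Fin m, j < i → shat i ⬝ᵥ s j = 0 := by
  intro i j hj
  have h : s j = shat j + ∑ k ∈ Finset.univ.filter (fun k => k < j),
      ((shat k ⬝ᵥ s j) / (shat k ⬝ᵥ shat k)) • shat k := by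
    rw [hshat j]; ring
  rw [h, dotProduct_add, dp_sum _ _ _, dotProduct_comm (shat i) (shat j),
    gs_orth hli hshat i j hj]
  have : ∑ k ∈ Finset.univ.filter (fun k => k < j),
      shat i ⬝ᵥ (((shat k ⬝ᵥ s j) / (shat k ⬝ᵥ shat k)) • shat k) = 0 := by
    apply Finset.sum_eq_zero
    intro k hk
    rw [Finset.mem_filter] at hk
    rw [dotProduct_smul, dotProduct_comm (shat i) (shat k),
      gs_orth hli hshat i k (hk.2.trans hj), smul_zero]
  rw [this, add_zero]

end GS

theorem stmt_18 (n m : ℕ) (s y : Fin m → (Fin n → ℝ))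
    (hli : LinearIndependent ℝ s)
    (shat : Fin m → (Fin n → ℝ))
    (hshat : ∀ i : Fin m, shat i = s i -
      ∑ j ∈ Finset.univ.filter (fun j => j < i),
        ((shat j ⬝ᵥ s i) / (shat j ⬝ᵥ shat j)) • shat j)
    (B : ℕ → Matrix (Fin n) (Fin n) ℝ) (hB0 : B 0 = 1)
    (hBsucc : ∀ i : Fin m, B (i + 1) = B i +
      (shat i ⬝ᵥ s i)⁻¹ • Matrix.vecMulVec (y i - (B i).mulVec (s i)) (shat i))
    (S Y : Matrix (Fin n) (Fin m) ℝ)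
    (hS : S = Matrix.of fun (a : Fin n) (j : Fin m) => s j a)
    (hY : Y = Matrix.of fun (a : Fin n) (j : Fin m) => y j a) :
    B m = 1 + (Y - S) * (S.transpose * S)⁻¹ * S.transpose ∧
    B m * S = Y ∧
    (∀ z : Fin n → ℝ, (∀ j : Fin m, s j ⬝ᵥ z = 0) → (B m).mulVec z = z) := by
  classical
  have hnz := gs_nz hli hshat
  have hself := gs_self hli hshat
  have hperp := gs_perp_s hli hshat
  have hne : ∀ i : Fin m, shat i ⬝ᵥ s i ≠ 0 := fun i h =>
    hnz i (dotProduct_self_eq_zero.mp ((hself i).symm.trans h))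
  have key : ∀ k : ℕ, k ≤ m →
      (∀ j : Fin m, (j : ℕ) < k → B k *ᵥ s j = y j) ∧
      (∀ z : Fin n → ℝ, (∀ j : Fin m, (j : ℕ) < k → shat j ⬝ᵥ z = 0) →
        B k *ᵥ z = z) := by
    intro k
    induction k with
    | zero =>
      intro _
      exact ⟨fun j hj => absurd hj (Nat.not_lt_zero _),
        fun z _ => by rw [hB0, one_mulVec]⟩
    | succ k ih =>
      intro hk1
      have hk : k < m := hk1
      obtain ⟨ih1, ih2⟩ := ih hk.le
      set i : Fin m := ⟨k, hk⟩ with hidef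
      have hB : B (k + 1) = B k +
          (shat i ⬝ᵥ s i)⁻¹ • vecMulVec (y i - B k *ᵥ s i) (shat i) := hBsucc i
      constructor
      · intro j hj
        rw [hB, add_mulVec, smul_mulVec, vmv_mulVec]
        rcases Nat.lt_succ_iff_lt_or_eq.mp hj with h | h
        · have hji : j < i := h
          rw [ih1 j h, hperp i j hji, zero_smul, smul_zero, add_zero]
        · have hji : j = i := Fin.ext h
          rw [hji, smul_smul, inv_mul_cancel₀ (hne i), one_smul]
          abel
      · intro z hz
        rw [hB, add_mulVec, smul_mulVec, vmv_mulVec,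
          hz i (Nat.lt_succ_self k), zero_smul, smul_zero, add_zero]
        exact ih2 z (fun j hj => hz j (Nat.lt_succ_of_lt hj))
  obtain ⟨Bm1, Bm2⟩ := key m le_rfl
  have Bcols : ∀ j : Fin m, B m *ᵥ s j = y j := fun j => Bm1 j j.isLt
  have Bperp : ∀ z : Fin n → ℝ, (∀ j : Fin m, s j ⬝ᵥ z = 0) →
      B m *ᵥ z = z := by
    intro z hz
    apply Bm2
    intro j _
    have hmem := gs_span hshat j
    let f : (Fin n → ℝ) →ₗ[ℝ] ℝ :=
      { toFun := fun v => v ⬝ᵥ z,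
        map_add' := fun a b => add_dotProduct a b z,
        map_smul' := fun c a => smul_dotProduct c a z }
    have hle : Submodule.span ℝ (s '' Set.Iic j) ≤ LinearMap.ker f := by
      rw [Submodule.span_le]
      rintro v ⟨k, -, rfl⟩
      exact LinearMap.mem_ker.mpr (hz k)
    exact LinearMap.mem_ker.mp (hle hmem)
  -- invertibility of the Gram matrix
  have hker : LinearMap.ker (Sᵀ * S).mulVecLin = ⊥ := by
    rw [Matrix.ker_mulVecLin_transpose_mul_self, LinearMap.ker_eq_bot']
    intro c hc
    have hc' : S *ᵥ c = 0 := hc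
    have hsum : ∑ j, c j • s j = 0 := by
      ext a
      have h := congrFun hc' a
      simp only [mulVec, dotProduct, hS, of_apply] at h
      simpa [Finset.sum_apply, mul_comm] using h
    exact funext fun j => Fintype.linearIndependent_iff.mp hli c hsum j
  have hunit : IsUnit (Sᵀ * S) :=
    Matrix.mulVec_injective_iff_isUnit.mp (LinearMap.ker_eq_bot.mp hker)
  have hinv : (Sᵀ * S)⁻¹ * (Sᵀ * S) = 1 :=
    Matrix.nonsing_inv_mul _ ((Matrix.isUnit_iff_isUnit_det _).mp hunit)
  set M := 1 + (Y - S) * (Sᵀ * S)⁻¹ * Sᵀ with hM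
  have hMS : M * S = Y := by
    rw [hM, Matrix.add_mul, Matrix.one_mul, Matrix.mul_assoc, Matrix.mul_assoc, hinv, Matrix.mul_one]
    abel
  have Mcols : ∀ j : Fin m, M *ᵥ s j = y j := by
    intro j
    have h1 : S *ᵥ Pi.single j 1 = s j := by
      ext a; simp [hS, mulVec_single]
    have h2 : Y *ᵥ Pi.single j 1 = y j := by
      ext a; simp [hY, mulVec_single]
    have h3 := congrArg (fun A => A *ᵥ Pi.single j 1) hMS
    simpa only [← mulVec_mulVec, h1, h2] using h3
  have Mperp : ∀ z : Fin n → ℝ, (∀ j : Fin m, s j ⬝ᵥ z = 0) →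
      M *ᵥ z = z := by
    intro z hz
    have hSz : Sᵀ *ᵥ z = 0 := by
      ext j
      simpa [hS, mulVec, dotProduct] using hz j
    rw [hM, add_mulVec, one_mulVec, ← mulVec_mulVec, hSz, mulVec_zero, add_zero]
  have hagree : ∀ v : Fin n → ℝ, B m *ᵥ v = M *ᵥ v := by
    intro v
    let E := EuclideanSpace ℝ (Fin n)
    let K : Submodule ℝ E := Submodule.span ℝ (Set.range fun j => (WithLp.toLp 2 (s j) : E))
    haveI : FiniteDimensional ℝ K :=
      FiniteDimensional.span_of_finite ℝ (Set.finite_range _)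
    obtain ⟨p, hp, q, hq, hv⟩ := K.exists_add_mem_mem_orthogonal (WithLp.toLp 2 v : E)
    obtain ⟨c, hc⟩ := (Submodule.mem_span_range_iff_exists_fun ℝ).mp hp
    have hc' : ∑ j, c j • s j = p.ofLp := by rw [← hc, WithLp.ofLp_sum]; rfl
    have hq' : ∀ j : Fin m, s j ⬝ᵥ q.ofLp = 0 := by
      intro j
      have hm : (WithLp.toLp 2 (s j) : E) ∈ K := Submodule.subset_span ⟨j, rfl⟩
      have h0 := (Submodule.mem_orthogonal K q).mp hq _ hm
      rw [EuclideanSpace.inner_eq_star_dotProduct] at h0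
      simpa [dotProduct_comm] using h0
    have hv' : v = p.ofLp + q.ofLp := congrArg WithLp.ofLp hv
    have hsum : ∀ A : Matrix (Fin n) (Fin n) ℝ, (∀ j, A *ᵥ s j = y j) →
        A *ᵥ p.ofLp = ∑ j, c j • y j := by
      intro A hA
      rw [← hc']
      calc A *ᵥ (∑ j, c j • s j) = A.mulVecLin (∑ j, c j • s j) := rfl
        _ = ∑ j, c j • A.mulVecLin (s j) := by
            rw [map_sum]
            exact Finset.sum_congr rfl fun j _ => A.mulVecLin.map_smul _ _
        _ = ∑ j, c j • y j := by
            simp only [mulVecLin_apply]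
            exact Finset.sum_congr rfl fun j _ => by rw [hA j]
    rw [hv', mulVec_add, mulVec_add, hsum _ Bcols, hsum _ Mcols,
      Bperp _ hq', Mperp _ hq']
  have hfinal : B m = M := by
    ext a b
    have h := congrFun (hagree (Pi.single b 1)) a
    simpa [mulVec_single] using h
  exact ⟨hfinal, by rw [hfinal]; exact hMS, Bperp⟩
end
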